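/- Let a ≥ 1 be a real number, let n ≥ 4a be an integer, let f: {0,1}^n → ℝ be a nonnegative a-self-bounding function, let ρ ∈ [0,1], and set τ = (1 − (1−ρ)/(2(1 − (a−1)/n)))^a. Then ‖T_ρ f − f‖_1 ≤ 2(1 − τ)·‖f‖_1. -/

import Mathlib

noncomputable section

/-- A function `f : {0,1}^n → ℝ` is `a`-self-bounding. -/
def SelfBounding (n : ℕ) (a : ℝ) (f : (Fin n → Bool) → ℝ) : Prop :=
  ∀ x : Fin n → Bool,
    (∀ i : Fin n,
      f x - min (f (Function.update x i false)) (f (Function.update x i true)) ≤ 1) ∧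
    ∑ i : Fin n,
      (f x - min (f (Function.update x i false)) (f (Function.update x i true))) ≤ a * f x

/-- Expectation with respect to the uniform distribution on `{0,1}^n`. -/
def expect (n : ℕ) (g : (Fin n → Bool) → ℝ) : ℝ :=
  (∑ x : Fin n → Bool, g x) / 2 ^ n

/-- The noise operator `T_ρ`. -/
def noiseOp (n : ℕ) (ρ : ℝ) (f : (Fin n → Bool) → ℝ) (x : Fin n → Bool) : ℝ :=
  ∑ y : Fin n → Bool,
    (∏ i : Fin n, if y i = x i then (1 + ρ) / 2 else (1 - ρ) / 2) * f y

namespace NoiseAux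

open Finset

variable {n : ℕ}

/-- Flip the coordinates of `x` in `D`. -/
def flips (x : Fin n → Bool) (D : Finset (Fin n)) : Fin n → Bool :=
  fun i => if i ∈ D then !(x i) else x i

lemma flips_apply_mem (x : Fin n → Bool) {D : Finset (Fin n)} {i : Fin n} (h : i ∈ D) :
    flips x D i = !(x i) := by simp [flips, h]

lemma flips_apply_not_mem (x : Fin n → Bool) {D : Finset (Fin n)} {i : Fin n} (h : i ∉ D) :
    flips x D i = x i := by simp [flips, h]

lemma flips_flips (x : Fin n → Bool) (D : Finset (Fin n)) :
    flips (flips x D) D = x := by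
  funext i
  by_cases h : i ∈ D <;> simp [flips, h]

lemma flips_bijective (x : Fin n → Bool) :
    Function.Bijective (fun D : Finset (Fin n) => flips x D) := by
  rw [Function.bijective_iff_has_inverse]
  refine ⟨fun y => univ.filter (fun i => ¬ (y i = x i)), ?_, ?_⟩
  · intro D
    ext i
    simp only [mem_filter, mem_univ, true_and]
    by_cases h : i ∈ D
    · simp [flips_apply_mem x h, h]
    · simp [flips_apply_not_mem x h, h]
  · intro y
    funext i
    show flips x (univ.filter (fun i => ¬ (y i = x i))) i = y i
    by_cases h : y i = x i
    · rw [flips_apply_not_mem, h]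
      simp [h]
    · rw [flips_apply_mem]
      · cases hx : (x i) <;> cases hy : (y i) <;> simp_all
      · simp [h]

lemma flips_singleton (x : Fin n → Bool) (j : Fin n) :
    flips x {j} = Function.update x j (!(x j)) := by
  funext i
  by_cases h : i = j
  · subst h; simp [flips]
  · simp [flips, h, Function.update_of_ne h]

lemma flips_insert (x : Fin n → Bool) {j : Fin n} {D : Finset (Fin n)} (h : j ∉ D) :
    flips (flips x {j}) D = flips x (insert j D) := by
  funext i
  by_cases hij : i = j
  · subst hij
    simp [flips, h, mem_insert]
  · by_cases hiD : i ∈ D <;> simp [flips, hij, hiD, mem_insert]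

/-- The kernel rewrite of the noise operator. -/
lemma noiseOp_eq_sum_flips (ρ : ℝ) (f : (Fin n → Bool) → ℝ) (x : Fin n → Bool) :
    noiseOp n ρ f x =
      ∑ D : Finset (Fin n),
        ((1 + ρ) / 2) ^ (n - D.card) * ((1 - ρ) / 2) ^ D.card * f (flips x D) := by
  rw [noiseOp, ← Fintype.sum_bijective _ (flips_bijective x) _ _ (fun D => rfl)]
  refine Fintype.sum_congr _ _ (fun D => ?_)
  congr 1
  have : ∀ i : Fin n, (if flips x D i = x i then (1 + ρ) / 2 else (1 - ρ) / 2)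
      = (if i ∈ D then (1 - ρ) / 2 else (1 + ρ) / 2) := by
    intro i
    by_cases h : i ∈ D
    · simp [flips_apply_mem x h, h, Bool.not_ne_self]
    · simp [flips_apply_not_mem x h, h]
  rw [Fintype.prod_congr _ _ this, ← Finset.prod_mul_prod_compl D]
  rw [Finset.prod_congr rfl (fun i (h : i ∈ D) => if_pos h),
      Finset.prod_congr rfl (fun i (h : i ∈ Dᶜ) => if_neg (Finset.mem_compl.mp h)),
      Finset.prod_const, Finset.prod_const, Finset.card_compl, Fintype.card_fin, mul_comm]


section SB

variable {a : ℝ} {f : (Fin n → Bool) → ℝ}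

/-- One-coordinate decrement. -/
def dec (f : (Fin n → Bool) → ℝ) (x : Fin n → Bool) (j : Fin n) : ℝ :=
  f x - min (f (Function.update x j false)) (f (Function.update x j true))

lemma dec_nonneg (x : Fin n → Bool) (j : Fin n) : 0 ≤ dec f x j := by
  have : min (f (Function.update x j false)) (f (Function.update x j true)) ≤ f x := by
    cases hxj : x j
    · have hupd : Function.update x j false = x := by
        rw [← hxj]; exact Function.update_eq_self j x
      rw [hupd]
      exact min_le_left _ _
    · have hupd : Function.update x j true = x := by
        rw [← hxj]; exact Function.update_eq_self j x
      rw [hupd]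
      exact min_le_right _ _
  simp only [dec]
  linarith

lemma flips_single_ge (x : Fin n → Bool) (j : Fin n) :
    f x - dec f x j ≤ f (flips x {j}) := by
  rw [flips_singleton]
  have : min (f (Function.update x j false)) (f (Function.update x j true))
      ≤ f (Function.update x j (!(x j))) := by
    cases x j
    · simpa using min_le_right (f (Function.update x j false)) (f (Function.update x j true))
    · simpa using min_le_left (f (Function.update x j false)) (f (Function.update x j true))
  simp only [dec]
  linarith

lemma sum_dec_le (hf : SelfBounding n a f) (x : Fin n → Bool) (T : Finset (Fin n)) :
    ∑ j ∈ T, dec f x j ≤ a * f x := by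
  refine le_trans ?_ ((hf x).2)
  exact Finset.sum_le_sum_of_subset_of_nonneg (Finset.subset_univ T)
    (fun j _ _ => dec_nonneg x j)

lemma sum_flips_single_ge (hf : SelfBounding n a f) (x : Fin n → Bool) (T : Finset (Fin n)) :
    (T.card : ℝ) * f x - a * f x ≤ ∑ j ∈ T, f (flips x {j}) := by
  have h1 : ∑ j ∈ T, (f x - dec f x j) ≤ ∑ j ∈ T, f (flips x {j}) :=
    Finset.sum_le_sum (fun j _ => flips_single_ge x j)
  have h2 : ∑ j ∈ T, (f x - dec f x j) = (T.card : ℝ) * f x - ∑ j ∈ T, dec f x j := by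
    rw [Finset.sum_sub_distrib, Finset.sum_const, nsmul_eq_mul]
  have h3 := sum_dec_le hf x T
  linarith

end SB

/-- The lower-bound function for averages over `k`-subsets of an `m`-dimensional cube. -/
def Phi (a : ℝ) (m k : ℕ) : ℝ :=
  if (m : ℝ) - a + 1 ≤ k then 0 else (1 - (k : ℝ) / ((m : ℝ) - a + 1)) ^ (a : ℝ)

lemma Phi_nonneg (a : ℝ) (m k : ℕ) : 0 ≤ Phi a m k := by
  unfold Phi
  split
  · exact le_refl 0
  · rename_i h
    push_neg at h
    have hc : (0 : ℝ) < (m : ℝ) - a + 1 := lt_of_le_of_lt (Nat.cast_nonneg k) h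
    have hlt : (k : ℝ) / ((m : ℝ) - a + 1) < 1 := (div_lt_one hc).mpr h
    exact Real.rpow_nonneg (by linarith) _

lemma Phi_le_one (a : ℝ) (ha : 1 ≤ a) (m k : ℕ) : Phi a m k ≤ 1 := by
  unfold Phi
  split
  · norm_num
  · rename_i h
    push_neg at h
    have hc : (0 : ℝ) < (m : ℝ) - a + 1 := lt_of_le_of_lt (Nat.cast_nonneg k) h
    have h0 : (0 : ℝ) ≤ (k : ℝ) / ((m : ℝ) - a + 1) := by positivity
    exact Real.rpow_le_one (by
      have : (k : ℝ) / ((m : ℝ) - a + 1) < 1 := (div_lt_one hc).mpr h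
      linarith) (by linarith) (by linarith)

lemma Phi_step (a : ℝ) (ha : 1 ≤ a) {m k : ℕ} (hm : 1 ≤ m)
    (h : (k : ℝ) + 1 < (m : ℝ) - a + 1) :
    (m : ℝ) * Phi a m (k + 1) ≤ ((m : ℝ) - a) * Phi a (m - 1) k := by
  have hcast : ((m - 1 : ℕ) : ℝ) = (m : ℝ) - 1 := by
    rw [Nat.cast_sub hm, Nat.cast_one]
  set q : ℝ := (m : ℝ) - a with hq_def
  have hkq : (k : ℝ) < q := by linarith
  have hq : 0 < q := lt_of_le_of_lt (Nat.cast_nonneg k) hkq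
  have hq1 : (0 : ℝ) < q + 1 := by linarith
  have hb : (0 : ℝ) < q - k := by linarith
  have hPhi1 : Phi a m (k + 1) = ((q - k) / (q + 1)) ^ (a : ℝ) := by
    unfold Phi
    rw [if_neg (by push_cast; linarith)]
    congr 1
    have hme : (m : ℝ) - a + 1 = q + 1 := by rw [hq_def]
    rw [hme, one_sub_div hq1.ne']
    push_cast
    ring_nf
  have hPhi2 : Phi a (m - 1) k = ((q - k) / q) ^ (a : ℝ) := by
    unfold Phi
    rw [if_neg (by rw [hcast]; push_cast; linarith)]
    congr 1
    have hme : ((m - 1 : ℕ) : ℝ) - a + 1 = q := by rw [hcast, hq_def]; ring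
    rw [hme, one_sub_div hq.ne']
  rw [hPhi1, hPhi2]
  -- Bernoulli
  have hber : 1 + a * (1 / q) ≤ (1 + 1 / q) ^ (a : ℝ) := by
    refine one_add_mul_self_le_rpow_one_add ?_ ha
    have : (0 : ℝ) < 1 / q := by positivity
    linarith
  have h1q : (1 : ℝ) + 1 / q = (q + 1) / q := by field_simp
  rw [h1q, Real.div_rpow (by linarith) hq.le] at hber
  have hqa : (0 : ℝ) < q ^ (a : ℝ) := Real.rpow_pos_of_pos hq _
  have hq1a : (0 : ℝ) < (q + 1) ^ (a : ℝ) := Real.rpow_pos_of_pos hq1 _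
  have key : q ^ (a : ℝ) * (q + a) ≤ (q + 1) ^ (a : ℝ) * q := by
    have h2 : (1 + a * (1 / q)) * (q ^ (a : ℝ) * q) ≤ ((q + 1) ^ (a : ℝ) / q ^ (a : ℝ)) * (q ^ (a : ℝ) * q) :=
      mul_le_mul_of_nonneg_right hber (by positivity)
    calc q ^ (a : ℝ) * (q + a) = (1 + a * (1 / q)) * (q ^ (a : ℝ) * q) := by
          field_simp
      _ ≤ ((q + 1) ^ (a : ℝ) / q ^ (a : ℝ)) * (q ^ (a : ℝ) * q) := h2
      _ = (q + 1) ^ (a : ℝ) * q := by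
          field_simp
  have hbk : (0 : ℝ) ≤ (q - k) ^ (a : ℝ) := Real.rpow_nonneg hb.le _
  have hmq : (m : ℝ) = q + a := by rw [hq_def]; ring
  rw [Real.div_rpow hb.le hq1.le, Real.div_rpow hb.le hq.le, hmq,
    mul_div_assoc', mul_div_assoc', div_le_div_iff₀ hq1a hqa]
  nlinarith [mul_le_mul_of_nonneg_left key hbk]


lemma flips_empty (x : Fin n → Bool) : flips x ∅ = x := by
  funext i; simp [flips]

/-- Double counting: each `(k+1)`-subset arises `k+1` times by choosing a distinguished element. -/
lemma key_count (f : (Fin n → Bool) → ℝ) (x : Fin n → Bool) (T : Finset (Fin n)) (k : ℕ) :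
    ((k : ℝ) + 1) * ∑ D ∈ T.powersetCard (k + 1), f (flips x D)
      = ∑ j ∈ T, ∑ D ∈ (T.erase j).powersetCard k, f (flips (flips x {j}) D) := by
  have hR : ∀ j ∈ T, ∀ D ∈ (T.erase j).powersetCard k,
      f (flips (flips x {j}) D) = f (flips x (insert j D)) := by
    intro j hj D hD
    have hsub := (Finset.mem_powersetCard.mp hD).1
    have hjD : j ∉ D := fun hjD => (Finset.notMem_erase j T) (hsub hjD)
    rw [flips_insert x hjD]
  rw [Finset.sum_congr rfl (fun j hj => Finset.sum_congr rfl (hR j hj))]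
  have hL : ∀ E ∈ T.powersetCard (k + 1),
      ((k : ℝ) + 1) * f (flips x E) = ∑ _j ∈ E, f (flips x E) := by
    intro E hE
    rw [Finset.sum_const, (Finset.mem_powersetCard.mp hE).2, nsmul_eq_mul]
    push_cast
    ring
  rw [Finset.mul_sum, Finset.sum_congr rfl hL, Finset.sum_sigma', Finset.sum_sigma']
  refine Finset.sum_bij' (fun q _ => (⟨q.2, q.1.erase q.2⟩ : (_ : Fin n) × Finset (Fin n)))
    (fun p _ => (⟨insert p.1 p.2, p.1⟩ : (_ : Finset (Fin n)) × Fin n)) ?_ ?_ ?_ ?_ ?_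
  · rintro ⟨E, j⟩ hq
    rw [Finset.mem_sigma] at hq
    obtain ⟨hE, hj⟩ := hq
    rw [Finset.mem_powersetCard] at hE
    rw [Finset.mem_sigma]
    constructor
    · exact hE.1 hj
    · rw [Finset.mem_powersetCard]
      exact ⟨Finset.erase_subset_erase _ hE.1, by rw [Finset.card_erase_of_mem hj, hE.2]; omega⟩
  · rintro ⟨j, D⟩ hp
    rw [Finset.mem_sigma] at hp
    obtain ⟨hj, hD⟩ := hp
    rw [Finset.mem_powersetCard] at hD
    have hjD : j ∉ D := fun h => (Finset.notMem_erase j T) (hD.1 h)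
    rw [Finset.mem_sigma]
    constructor
    · rw [Finset.mem_powersetCard]
      refine ⟨Finset.insert_subset hj (hD.1.trans (Finset.erase_subset _ _)), ?_⟩
      rw [Finset.card_insert_of_notMem hjD, hD.2]
    · exact Finset.mem_insert_self _ _
  · rintro ⟨E, j⟩ hq
    rw [Finset.mem_sigma] at hq
    have hj : j ∈ E := hq.2
    simp only [Finset.insert_erase hj]
  · rintro ⟨j, D⟩ hp
    rw [Finset.mem_sigma] at hp
    obtain ⟨hj, hD⟩ := hp
    rw [Finset.mem_powersetCard] at hD
    have hjD : j ∉ D := fun h => (Finset.notMem_erase j T) (hD.1 h)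
    simp only [Finset.erase_insert hjD]
  · rintro ⟨E, j⟩ hq
    rw [Finset.mem_sigma] at hq
    have hj : j ∈ E := hq.2
    simp only [Finset.insert_erase hj]

/-- Main lemma: lower bound for sums of `f` over Hamming spheres of subcubes. -/
lemma sphere_sum_ge {a : ℝ} {f : (Fin n → Bool) → ℝ} (ha : 1 ≤ a)
    (hf0 : ∀ x, 0 ≤ f x) (hf : SelfBounding n a f) :
    ∀ (k : ℕ) (T : Finset (Fin n)) (x : Fin n → Bool),
      (T.card.choose k : ℝ) * Phi a T.card k * f x ≤ ∑ D ∈ T.powersetCard k, f (flips x D) := by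
  intro k
  induction k with
  | zero =>
    intro T x
    rw [Finset.powersetCard_zero, Finset.sum_singleton, flips_empty, Nat.choose_zero_right]
    have h1 : Phi a T.card 0 ≤ 1 := Phi_le_one a ha _ _
    have h2 : 0 ≤ Phi a T.card 0 := Phi_nonneg a _ _
    simp only [Nat.cast_one, one_mul]
    nlinarith [hf0 x]
  | succ k ih =>
    intro T x
    by_cases hcase : (T.card : ℝ) - a + 1 ≤ ((k + 1 : ℕ) : ℝ)
    · have hzero : Phi a T.card (k + 1) = 0 := by
        unfold Phi
        rw [if_pos hcase]
      rw [hzero, mul_zero, zero_mul]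
      exact Finset.sum_nonneg (fun D _ => hf0 _)
    · push_neg at hcase
      have h' : (k : ℝ) + 1 < (T.card : ℝ) - a + 1 := by
        push_cast at hcase
        linarith
      set m := T.card with hm_def
      have hm1 : 1 ≤ m := by
        by_contra h0
        push_neg at h0
        interval_cases m
        simp only [Nat.cast_zero] at h'
        have : (0:ℝ) ≤ (k:ℝ) := Nat.cast_nonneg k
        linarith
      have hcast : ((m - 1 : ℕ) : ℝ) = (m : ℝ) - 1 := by
        rw [Nat.cast_sub hm1, Nat.cast_one]
      have hcard : ∀ j ∈ T, (T.erase j).card = m - 1 :=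
        fun j hj => by rw [Finset.card_erase_of_mem hj]
      -- the chain
      have hid := key_count f x T k
      have step1 : ((m - 1).choose k : ℝ) * Phi a (m - 1) k * (((m : ℝ) - a) * f x)
          ≤ ((k : ℝ) + 1) * ∑ D ∈ T.powersetCard (k + 1), f (flips x D) := by
        rw [hid]
        have hb : ∀ j ∈ T, ((m - 1).choose k : ℝ) * Phi a (m - 1) k * f (flips x {j})
            ≤ ∑ D ∈ (T.erase j).powersetCard k, f (flips (flips x {j}) D) := by
          intro j hj
          have := ih (T.erase j) (flips x {j})
          rwa [hcard j hj] at this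
        calc ((m - 1).choose k : ℝ) * Phi a (m - 1) k * (((m : ℝ) - a) * f x)
            ≤ ((m - 1).choose k : ℝ) * Phi a (m - 1) k * (∑ j ∈ T, f (flips x {j})) := by
              have hsum := sum_flips_single_ge hf x T
              have hnn : (0:ℝ) ≤ ((m - 1).choose k : ℝ) * Phi a (m - 1) k :=
                mul_nonneg (Nat.cast_nonneg _) (Phi_nonneg a _ _)
              have : ((m : ℝ) - a) * f x ≤ ∑ j ∈ T, f (flips x {j}) := by
                rw [← hm_def] at hsum
                linarith
              exact mul_le_mul_of_nonneg_left this hnn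
          _ = ∑ j ∈ T, ((m - 1).choose k : ℝ) * Phi a (m - 1) k * f (flips x {j}) := by
              rw [Finset.mul_sum]
          _ ≤ ∑ j ∈ T, ∑ D ∈ (T.erase j).powersetCard k, f (flips (flips x {j}) D) :=
              Finset.sum_le_sum hb
      -- numeric comparison
      have hchoose : ((k : ℝ) + 1) * (m.choose (k + 1) : ℝ) = (m : ℝ) * ((m - 1).choose k : ℝ) := by
        have hnat := Nat.add_one_mul_choose_eq (m - 1) k
        simp only [Nat.succ_eq_add_one, Nat.sub_add_cancel hm1] at hnat
        have hcastd := congrArg (Nat.cast : ℕ → ℝ) hnat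
        push_cast at hcastd
        linarith
      have hstep := Phi_step a ha hm1 h'
      have hfx := hf0 x
      have hnum : ((k : ℝ) + 1) * ((m.choose (k + 1) : ℝ) * Phi a m (k + 1) * f x)
          ≤ ((m - 1).choose k : ℝ) * Phi a (m - 1) k * (((m : ℝ) - a) * f x) := by
        have h1 : ((k : ℝ) + 1) * ((m.choose (k + 1) : ℝ) * Phi a m (k + 1) * f x)
            = (((k : ℝ) + 1) * (m.choose (k + 1) : ℝ)) * (Phi a m (k + 1) * f x) := by ring
        rw [h1, hchoose]
        have h2 : (m : ℝ) * ((m - 1).choose k : ℝ) * (Phi a m (k + 1) * f x)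
            = ((m - 1).choose k : ℝ) * (((m : ℝ) * Phi a m (k + 1)) * f x) := by ring
        rw [h2]
        have h3 : ((m - 1).choose k : ℝ) * Phi a (m - 1) k * (((m : ℝ) - a) * f x)
            = ((m - 1).choose k : ℝ) * ((((m : ℝ) - a) * Phi a (m - 1) k) * f x) := by ring
        rw [h3]
        refine mul_le_mul_of_nonneg_left ?_ (Nat.cast_nonneg _)
        exact mul_le_mul_of_nonneg_right hstep hfx
      have hk1 : (0 : ℝ) < (k : ℝ) + 1 := by positivity
      have hfin := le_trans hnum step1
      exact (mul_le_mul_iff_right₀ hk1).mp hfin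


lemma binom_weight_sum (δ : ℝ) (n : ℕ) :
    ∑ k ∈ Finset.range (n + 1), δ ^ k * (1 - δ) ^ (n - k) * (n.choose k : ℝ) = 1 := by
  have h := add_pow δ (1 - δ) n
  rw [add_sub_cancel, one_pow] at h
  exact h.symm

lemma binom_weight_mean (δ : ℝ) (n : ℕ) (hn : 1 ≤ n) :
    ∑ k ∈ Finset.range (n + 1), (δ ^ k * (1 - δ) ^ (n - k) * (n.choose k : ℝ)) * (k : ℝ)
      = (n : ℝ) * δ := by
  rw [Finset.sum_range_succ']
  simp only [Nat.cast_zero, mul_zero, add_zero]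
  have hterm : ∀ i ∈ Finset.range n,
      (δ ^ (i + 1) * (1 - δ) ^ (n - (i + 1)) * (n.choose (i + 1) : ℝ)) * ((i + 1 : ℕ) : ℝ)
        = ((n : ℝ) * δ) * (δ ^ i * (1 - δ) ^ (n - 1 - i) * ((n - 1).choose i : ℝ)) := by
    intro i hi
    have h1 : n - (i + 1) = n - 1 - i := by omega
    have hnat := Nat.add_one_mul_choose_eq (n - 1) i
    simp only [Nat.succ_eq_add_one, Nat.sub_add_cancel hn] at hnat
    have hcast := congrArg (Nat.cast : ℕ → ℝ) hnat
    push_cast at hcast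
    rw [h1, pow_succ]
    push_cast
    linear_combination (-(δ ^ i * δ * (1 - δ) ^ (n - 1 - i))) * hcast
  rw [Finset.sum_congr rfl hterm, ← Finset.mul_sum]
  have hfin : ∑ i ∈ Finset.range n, δ ^ i * (1 - δ) ^ (n - 1 - i) * ((n - 1).choose i : ℝ) = 1 := by
    have := binom_weight_sum δ (n - 1)
    rwa [Nat.sub_add_cancel hn] at this
  rw [hfin, mul_one]

lemma psi_convexOn (a : ℝ) (ha : 1 ≤ a) (c : ℝ) :
    ConvexOn ℝ Set.univ (fun t : ℝ => (max 0 (1 - t / c)) ^ (a : ℝ)) := by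
  refine ⟨convex_univ, ?_⟩
  intro x _ y _ p q hp hq hpq
  simp only [smul_eq_mul]
  have hu0 : (0:ℝ) ≤ max 0 (1 - x / c) := le_max_left _ _
  have hv0 : (0:ℝ) ≤ max 0 (1 - y / c) := le_max_left _ _
  have hmid : max 0 (1 - (p * x + q * y) / c)
      ≤ p * max 0 (1 - x / c) + q * max 0 (1 - y / c) := by
    have h1 : 1 - (p * x + q * y) / c = p * (1 - x / c) + q * (1 - y / c) := by
      linear_combination -hpq
    refine max_le (add_nonneg (mul_nonneg hp hu0) (mul_nonneg hq hv0)) ?_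
    rw [h1]
    exact add_le_add (mul_le_mul_of_nonneg_left (le_max_right _ _) hp)
      (mul_le_mul_of_nonneg_left (le_max_right _ _) hq)
  calc (max 0 (1 - (p * x + q * y) / c)) ^ (a : ℝ)
      ≤ (p * max 0 (1 - x / c) + q * max 0 (1 - y / c)) ^ (a : ℝ) :=
        Real.rpow_le_rpow (le_max_left _ _) hmid (by linarith)
    _ ≤ p * (max 0 (1 - x / c)) ^ (a : ℝ) + q * (max 0 (1 - y / c)) ^ (a : ℝ) := by
        have hconv := (convexOn_rpow ha).2 (Set.mem_Ici.mpr hu0) (Set.mem_Ici.mpr hv0) hp hq hpq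
        simpa only [smul_eq_mul] using hconv

lemma jensen_phi (a δ : ℝ) (ha : 1 ≤ a) (n : ℕ) (hn : 1 ≤ n) (hδ0 : 0 ≤ δ) (hδ1 : δ ≤ 1)
    (hc : 0 < (n : ℝ) - a + 1) :
    (max 0 (1 - (n : ℝ) * δ / ((n : ℝ) - a + 1))) ^ (a : ℝ)
      ≤ ∑ k ∈ Finset.range (n + 1),
          δ ^ k * (1 - δ) ^ (n - k) * (n.choose k : ℝ) * Phi a n k := by
  set c : ℝ := (n : ℝ) - a + 1 with hc_def
  have hψ : ∀ k ∈ Finset.range (n + 1),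
      Phi a n k = (max 0 (1 - (k : ℝ) / c)) ^ (a : ℝ) := by
    intro k _
    unfold Phi
    split
    · rename_i h
      have hk : c ≤ (k : ℝ) := by rw [hc_def]; linarith
      have : 1 - (k : ℝ) / c ≤ 0 := by
        rw [sub_nonpos, le_div_iff₀ hc]
        linarith
      rw [max_eq_left this, Real.zero_rpow (by linarith)]
    · rename_i h
      push_neg at h
      have : 0 ≤ 1 - (k : ℝ) / c := by
        rw [sub_nonneg, div_le_one hc, hc_def]
        linarith
      rw [max_eq_right this]
  have hw0 : ∀ k ∈ Finset.range (n + 1), 0 ≤ δ ^ k * (1 - δ) ^ (n - k) * (n.choose k : ℝ) := by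
    intro k _
    have h1 : (0:ℝ) ≤ δ ^ k := pow_nonneg hδ0 k
    have h2 : (0:ℝ) ≤ (1 - δ) ^ (n - k) := pow_nonneg (by linarith) _
    positivity
  have hw1 := binom_weight_sum δ n
  have hjen := (psi_convexOn a ha c).map_sum_le (p := fun k : ℕ => (k : ℝ)) hw0 hw1 (fun k _ => Set.mem_univ _)
  simp only [smul_eq_mul] at hjen
  have hmean : ∑ k ∈ Finset.range (n + 1),
      δ ^ k * (1 - δ) ^ (n - k) * (n.choose k : ℝ) * (k : ℝ) = (n : ℝ) * δ :=
    binom_weight_mean δ n hn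
  rw [hmean] at hjen
  refine le_trans hjen (le_of_eq ?_)
  refine Finset.sum_congr rfl (fun k hk => ?_)
  rw [hψ k hk]

/-- The pointwise lower bound `T_ρ f ≥ τ f`. -/
lemma pointwise_bound {a ρ : ℝ} {f : (Fin n → Bool) → ℝ} (ha : 1 ≤ a)
    (hf0 : ∀ x, 0 ≤ f x) (hf : SelfBounding n a f)
    (hρ0 : 0 ≤ ρ) (hρ1 : ρ ≤ 1) (hn1 : 1 ≤ n) (hc : 0 < (n : ℝ) - a + 1)
    (x : Fin n → Bool) :
    (max 0 (1 - (n : ℝ) * ((1 - ρ) / 2) / ((n : ℝ) - a + 1))) ^ (a : ℝ) * f x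
      ≤ noiseOp n ρ f x := by
  set δ : ℝ := (1 - ρ) / 2 with hδ_def
  have hδ0 : 0 ≤ δ := by rw [hδ_def]; linarith
  have hδ1 : δ ≤ 1 := by rw [hδ_def]; linarith
  have hA : (1 + ρ) / 2 = 1 - δ := by rw [hδ_def]; ring
  have hcardu : (Finset.univ : Finset (Fin n)).card = n := by
    rw [Finset.card_univ, Fintype.card_fin]
  rw [noiseOp_eq_sum_flips]
  have hgroup : ∑ D : Finset (Fin n),
      ((1 + ρ) / 2) ^ (n - D.card) * ((1 - ρ) / 2) ^ D.card * f (flips x D)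
      = ∑ k ∈ Finset.range (n + 1), ∑ D ∈ Finset.powersetCard k Finset.univ,
          ((1 + ρ) / 2) ^ (n - D.card) * ((1 - ρ) / 2) ^ D.card * f (flips x D) := by
    rw [← Finset.powerset_univ, Finset.sum_powerset, hcardu]
  rw [hgroup]
  have hinner : ∀ k ∈ Finset.range (n + 1),
      δ ^ k * (1 - δ) ^ (n - k) * (n.choose k : ℝ) * Phi a n k * f x
        ≤ ∑ D ∈ Finset.powersetCard k Finset.univ,
            ((1 + ρ) / 2) ^ (n - D.card) * ((1 - ρ) / 2) ^ D.card * f (flips x D) := by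
    intro k _
    have hcongr : ∀ D ∈ Finset.powersetCard k (Finset.univ : Finset (Fin n)),
        ((1 + ρ) / 2) ^ (n - D.card) * ((1 - ρ) / 2) ^ D.card * f (flips x D)
          = (1 - δ) ^ (n - k) * δ ^ k * f (flips x D) := by
      intro D hD
      rw [(Finset.mem_powersetCard.mp hD).2, hA, hδ_def]
    rw [Finset.sum_congr rfl hcongr, ← Finset.mul_sum]
    have hsphere := sphere_sum_ge ha hf0 hf k Finset.univ x
    rw [hcardu] at hsphere
    have hwnn : (0:ℝ) ≤ (1 - δ) ^ (n - k) * δ ^ k :=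
      mul_nonneg (pow_nonneg (by linarith) _) (pow_nonneg hδ0 _)
    calc δ ^ k * (1 - δ) ^ (n - k) * (n.choose k : ℝ) * Phi a n k * f x
        = ((1 - δ) ^ (n - k) * δ ^ k) * ((n.choose k : ℝ) * Phi a n k * f x) := by ring
      _ ≤ ((1 - δ) ^ (n - k) * δ ^ k) * ∑ D ∈ Finset.powersetCard k Finset.univ, f (flips x D) :=
          mul_le_mul_of_nonneg_left hsphere hwnn
  calc (max 0 (1 - (n : ℝ) * δ / ((n : ℝ) - a + 1))) ^ (a : ℝ) * f x
      ≤ (∑ k ∈ Finset.range (n + 1),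
          δ ^ k * (1 - δ) ^ (n - k) * (n.choose k : ℝ) * Phi a n k) * f x :=
        mul_le_mul_of_nonneg_right (jensen_phi a δ ha n hn1 hδ0 hδ1 hc) (hf0 x)
    _ = ∑ k ∈ Finset.range (n + 1),
          δ ^ k * (1 - δ) ^ (n - k) * (n.choose k : ℝ) * Phi a n k * f x := by
        rw [Finset.sum_mul]
    _ ≤ _ := Finset.sum_le_sum hinner

/-- The noise operator preserves the total sum. -/
lemma sum_noiseOp_eq (ρ : ℝ) (f : (Fin n → Bool) → ℝ) :
    ∑ x : Fin n → Bool, noiseOp n ρ f x = ∑ x : Fin n → Bool, f x := by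
  have hcardu : (Finset.univ : Finset (Fin n)).card = n := by
    rw [Finset.card_univ, Fintype.card_fin]
  simp only [noiseOp_eq_sum_flips]
  rw [Finset.sum_comm]
  have hx : ∀ D : Finset (Fin n),
      ∑ x : Fin n → Bool, f (flips x D) = ∑ x : Fin n → Bool, f x := by
    intro D
    exact Fintype.sum_bijective (fun x => flips x D)
      (Function.Involutive.bijective (fun x => flips_flips x D)) _ _ (fun x => rfl)
  have hW : ∑ D : Finset (Fin n), ((1 + ρ) / 2) ^ (n - D.card) * ((1 - ρ) / 2) ^ D.card = 1 := by
    have hgroup : ∑ D : Finset (Fin n),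
        ((1 + ρ) / 2) ^ (n - D.card) * ((1 - ρ) / 2) ^ D.card
        = ∑ k ∈ Finset.range (n + 1), ∑ D ∈ Finset.powersetCard k (Finset.univ : Finset (Fin n)),
            ((1 + ρ) / 2) ^ (n - D.card) * ((1 - ρ) / 2) ^ D.card := by
      rw [← Finset.powerset_univ, Finset.sum_powerset, hcardu]
    rw [hgroup]
    have hk : ∀ k ∈ Finset.range (n + 1),
        ∑ D ∈ Finset.powersetCard k (Finset.univ : Finset (Fin n)),
          ((1 + ρ) / 2) ^ (n - D.card) * ((1 - ρ) / 2) ^ D.card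
        = ((1 - ρ) / 2) ^ k * ((1 + ρ) / 2) ^ (n - k) * (n.choose k : ℝ) := by
      intro k _
      have hcongr : ∀ D ∈ Finset.powersetCard k (Finset.univ : Finset (Fin n)),
          ((1 + ρ) / 2) ^ (n - D.card) * ((1 - ρ) / 2) ^ D.card
            = ((1 - ρ) / 2) ^ k * ((1 + ρ) / 2) ^ (n - k) := by
        intro D hD
        rw [(Finset.mem_powersetCard.mp hD).2]
        ring
      rw [Finset.sum_congr rfl hcongr, Finset.sum_const, Finset.card_powersetCard, hcardu,
        nsmul_eq_mul]
      ring
    rw [Finset.sum_congr rfl hk]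
    have := binom_weight_sum ((1 - ρ) / 2) n
    have harr : (1 : ℝ) - (1 - ρ) / 2 = (1 + ρ) / 2 := by ring
    rw [harr] at this
    exact this
  calc ∑ D : Finset (Fin n), ∑ x : Fin n → Bool,
        ((1 + ρ) / 2) ^ (n - D.card) * ((1 - ρ) / 2) ^ D.card * f (flips x D)
      = ∑ D : Finset (Fin n),
          ((1 + ρ) / 2) ^ (n - D.card) * ((1 - ρ) / 2) ^ D.card * ∑ x : Fin n → Bool, f x := by
        refine Finset.sum_congr rfl (fun D _ => ?_)
        rw [← Finset.mul_sum, hx D]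
    _ = ∑ x : Fin n → Bool, f x := by
        rw [← Finset.sum_mul, hW, one_mul]

end NoiseAux

theorem noiseOp_l1_close (n : ℕ) (a : ℝ) (ha : 1 ≤ a) (hn : 4 * a ≤ (n : ℝ))
    (f : (Fin n → Bool) → ℝ) (hf0 : ∀ x, 0 ≤ f x) (hf : SelfBounding n a f)
    (ρ : ℝ) (hρ : ρ ∈ Set.Icc (0 : ℝ) 1)
    (τ : ℝ) (hτ : τ = (1 - (1 - ρ) / (2 * (1 - (a - 1) / (n : ℝ)))) ^ (a : ℝ)) :
    expect n (fun x => |noiseOp n ρ f x - f x|) ≤ 2 * (1 - τ) * expect n (fun x => |f x|) := by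
  obtain ⟨hρ0, hρ1⟩ := hρ
  have hn4 : (4 : ℝ) ≤ (n : ℝ) := by linarith
  have hn1 : 1 ≤ n := by exact_mod_cast (by linarith : (1 : ℝ) ≤ (n : ℝ))
  have hc : 0 < (n : ℝ) - a + 1 := by linarith
  set δ : ℝ := (1 - ρ) / 2 with hδ_def
  have hδ0 : 0 ≤ δ := by rw [hδ_def]; linarith
  have hδh : δ ≤ 1 / 2 := by rw [hδ_def]; linarith
  have hnpos : (0 : ℝ) < (n : ℝ) := by linarith
  have hden : 1 - (a - 1) / (n : ℝ) = ((n : ℝ) - a + 1) / (n : ℝ) := by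
    field_simp
    ring
  have hbase : 1 - (1 - ρ) / (2 * (1 - (a - 1) / (n : ℝ)))
      = 1 - (n : ℝ) * δ / ((n : ℝ) - a + 1) := by
    rw [hden, hδ_def]
    congr 1
    rw [div_eq_div_iff (by positivity) hc.ne']
    field_simp
  have hbase0 : 0 ≤ 1 - (n : ℝ) * δ / ((n : ℝ) - a + 1) := by
    rw [sub_nonneg, div_le_one hc]
    nlinarith [mul_le_mul_of_nonneg_left hδh (le_of_lt hnpos)]
  have hτψ : τ = (max 0 (1 - (n : ℝ) * δ / ((n : ℝ) - a + 1))) ^ (a : ℝ) := by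
    rw [hτ, hbase, max_eq_right hbase0]
  have hτ1 : τ ≤ 1 := by
    rw [hτψ]
    refine Real.rpow_le_one (le_max_left _ _) ?_ (by linarith)
    refine max_le (by norm_num) ?_
    have h0 : 0 ≤ (n : ℝ) * δ / ((n : ℝ) - a + 1) := by positivity
    linarith
  have hpt : ∀ x, τ * f x ≤ noiseOp n ρ f x := by
    intro x
    rw [hτψ]
    exact NoiseAux.pointwise_bound ha hf0 hf hρ0 hρ1 hn1 hc x
  have hsumT := NoiseAux.sum_noiseOp_eq (n := n) ρ f
  have habs : ∀ x : Fin n → Bool, |noiseOp n ρ f x - f x|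
      ≤ (noiseOp n ρ f x - f x) + 2 * (1 - τ) * f x := by
    intro x
    refine abs_le.mpr ⟨?_, ?_⟩
    · nlinarith [hpt x, hf0 x]
    · nlinarith [hf0 x]
  have hsum : ∑ x : Fin n → Bool, |noiseOp n ρ f x - f x|
      ≤ 2 * (1 - τ) * ∑ x : Fin n → Bool, |f x| := by
    calc ∑ x : Fin n → Bool, |noiseOp n ρ f x - f x|
        ≤ ∑ x : Fin n → Bool, ((noiseOp n ρ f x - f x) + 2 * (1 - τ) * f x) :=
          Finset.sum_le_sum (fun x _ => habs x)
      _ = ((∑ x : Fin n → Bool, noiseOp n ρ f x) - (∑ x : Fin n → Bool, f x))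
            + 2 * (1 - τ) * ∑ x : Fin n → Bool, f x := by
          rw [Finset.sum_add_distrib, Finset.sum_sub_distrib, ← Finset.mul_sum]
      _ = 2 * (1 - τ) * ∑ x : Fin n → Bool, f x := by
          rw [hsumT]; ring
      _ = 2 * (1 - τ) * ∑ x : Fin n → Bool, |f x| := by
          congr 1
          exact Finset.sum_congr rfl (fun x _ => (abs_of_nonneg (hf0 x)).symm)
  unfold expect
  rw [← mul_div_assoc]
  exact (div_le_div_iff_of_pos_right (by positivity : (0:ℝ) < 2 ^ n)).mpr hsum
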